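/- Let f : ℝ → ℝ be continuous on [a,b] with a < b, and define F(t) = (1/(b-t))·∫_t^b f(s) ds − (1/(t-a))·∫_a^t f(s) ds on (a,b), extended continuously by F(a) = (1/(b-a))∫_a^b f − f(a) and F(b) = f(b) − (1/(b-a))∫_a^b f. Then there exists x ∈ (a,b) such that (1/(b-x)²)·∫_x^b f(s) ds + (1/(x-a)²)·∫_a^x f(s) ds − ((b-a)·f(x))/((x-a)(b-x)) = (2/(b-a))·[(f(a)+f(b))/2 − (1/(b-a))·∫_a^b f(s) ds]. -/

import Mathlib

open Set intervalIntegral MeasureTheory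

private lemma aux_mvt (f : ℝ → ℝ) (a b : ℝ) (hab : a < b) (hf : Continuous f) :
    ∃ x ∈ Set.Ioo a b,
      (1 / (b - x) ^ 2) * (∫ s in x..b, f s) +
          (1 / (x - a) ^ 2) * (∫ s in a..x, f s) -
          ((b - a) * f x) / ((x - a) * (b - x))
        = (2 / (b - a)) *
            ((f a + f b) / 2 - (1 / (b - a)) * ∫ s in a..b, f s) := by
  set Φ : ℝ → ℝ := fun t => ∫ s in a..t, f s with hΦdef
  have hba : b - a ≠ 0 := sub_ne_zero.2 hab.ne'
  have hΦd : ∀ t : ℝ, HasDerivAt Φ (f t) t := fun t =>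
    intervalIntegral.integral_hasDerivAt_right (hf.intervalIntegrable _ _)
      (hf.stronglyMeasurableAtFilter _ _) hf.continuousAt
  have hΦc : Continuous Φ := continuous_iff_continuousAt.2 fun t => (hΦd t).continuousAt
  have hΦa : Φ a = 0 := intervalIntegral.integral_same
  -- the auxiliary function and its formula on the interior
  set G : ℝ → ℝ := fun t => (1 / (b - t)) * (Φ b - Φ t) - (1 / (t - a)) * Φ t with hGdef
  set F : ℝ → ℝ := fun t =>
    if t ≤ a then (1 / (b - a)) * Φ b - f a
    else if b ≤ t then f b - (1 / (b - a)) * Φ b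
    else G t with hFdef
  have hFa : F a = (1 / (b - a)) * Φ b - f a := by simp [hFdef]
  have hFb : F b = f b - (1 / (b - a)) * Φ b := by
    simp [hFdef, not_le.2 hab, le_refl]
  have hFG : ∀ t ∈ Set.Ioo a b, F t = G t := by
    intro t ht
    simp [hFdef, not_le.2 ht.1, not_le.2 ht.2]
  -- derivative of G on the interior
  set E : ℝ → ℝ := fun x =>
    (1 / (b - x) ^ 2) * (Φ b - Φ x) + (1 / (x - a) ^ 2) * Φ x -
      ((b - a) * f x) / ((x - a) * (b - x)) with hEdef
  have hGd : ∀ x ∈ Set.Ioo a b, HasDerivAt G (E x) x := by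
    intro x hx
    have hbx : b - x ≠ 0 := sub_ne_zero.2 hx.2.ne'
    have hxa : x - a ≠ 0 := sub_ne_zero.2 hx.1.ne'
    have h1 : HasDerivAt (fun t : ℝ => b - t) (-1) x := by
      exact (hasDerivAt_id' x).const_sub b
    have h2 : HasDerivAt (fun t : ℝ => t - a) 1 x := by
      exact (hasDerivAt_id' x).sub_const a
    have h3 : HasDerivAt (fun t : ℝ => 1 / (b - t)) (1 / (b - x) ^ 2) x := by
      have := h1.inv hbx
      simpa only [one_div, neg_div, neg_neg, Pi.inv_def] using this
    have h4 : HasDerivAt (fun t : ℝ => 1 / (t - a)) (-(1 / (x - a) ^ 2)) x := by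
      have := h2.inv hxa
      simpa only [one_div, neg_div, neg_neg, Pi.inv_def] using this
    have h5 : HasDerivAt (fun t : ℝ => Φ b - Φ t) (-f x) x := by
      exact (hΦd x).const_sub (Φ b)
    have h6 := (h3.mul h5).sub (h4.mul (hΦd x))
    refine h6.congr_deriv ?_
    rw [hEdef]
    field_simp
    ring
  have hFd : ∀ x ∈ Set.Ioo a b, HasDerivAt F (E x) x := by
    intro x hx
    refine (hGd x hx).congr_of_eventuallyEq ?_
    filter_upwards [isOpen_Ioo.mem_nhds hx] with t ht using hFG t ht
  -- continuity of G off the singularities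
  have hGc : ∀ x : ℝ, b - x ≠ 0 → x - a ≠ 0 → ContinuousAt G x := by
    intro x hbx hxa
    rw [hGdef]
    have hΦc' := hΦc.continuousAt (x := x)
    fun_prop (disch := assumption)
  have hCa : ContinuousWithinAt F (Set.Icc a b) a := by
    rw [ContinuousWithinAt, nhdsWithin_Icc_eq_nhdsGE hab,
      show Set.Ici a = insert a (Set.Ioi a) by rw [Set.Ioi_insert],
      nhdsWithin_insert, Filter.tendsto_sup]
    constructor
    · exact tendsto_pure_nhds F a
    · have hev : G =ᶠ[nhdsWithin a (Set.Ioi a)] F := by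
        filter_upwards [Ioo_mem_nhdsGT_of_mem (Set.mem_Ico.2 ⟨le_rfl, hab⟩)] with t ht
        exact (hFG t ht).symm
      have t1 : Filter.Tendsto (fun t => (1 / (b - t)) * (Φ b - Φ t))
          (nhdsWithin a (Set.Ioi a)) (nhds ((1 / (b - a)) * Φ b)) := by
        have hc : ContinuousAt (fun t => (1 / (b - t)) * (Φ b - Φ t)) a := by
          have hΦc' := hΦc.continuousAt (x := a)
          fun_prop (disch := exact hba)
        have he : (1 / (b - a)) * (Φ b - Φ a) = (1 / (b - a)) * Φ b := by rw [hΦa]; ring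
        exact he ▸ hc.continuousWithinAt
      have t2 : Filter.Tendsto (fun t => (1 / (t - a)) * Φ t)
          (nhdsWithin a (Set.Ioi a)) (nhds (f a)) := by
        have hs := (hΦd a).hasDerivWithinAt (s := Set.Ioi a)
        rw [hasDerivWithinAt_iff_tendsto_slope' (by simp)] at hs
        refine hs.congr fun t => ?_
        rw [slope_def_field, hΦa, div_eq_inv_mul, one_div, sub_zero]
      have := (t1.sub t2).congr' hev
      simpa only [hFa] using this
  have hCb : ContinuousWithinAt F (Set.Icc a b) b := by
    rw [ContinuousWithinAt, nhdsWithin_Icc_eq_nhdsLE hab,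
      show Set.Iic b = insert b (Set.Iio b) by rw [Set.Iio_insert],
      nhdsWithin_insert, Filter.tendsto_sup]
    constructor
    · exact tendsto_pure_nhds F b
    · have hev : G =ᶠ[nhdsWithin b (Set.Iio b)] F := by
        filter_upwards [Ioo_mem_nhdsLT_of_mem (Set.mem_Ioc.2 ⟨hab, le_rfl⟩)] with t ht
        exact (hFG t ht).symm
      have t1 : Filter.Tendsto (fun t => (1 / (b - t)) * (Φ b - Φ t))
          (nhdsWithin b (Set.Iio b)) (nhds (f b)) := by
        have hs := (hΦd b).hasDerivWithinAt (s := Set.Iio b)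
        rw [hasDerivWithinAt_iff_tendsto_slope' (by simp)] at hs
        refine hs.congr fun t => ?_
        rw [slope_def_field]
        rcases eq_or_ne t b with rfl | htb
        · simp
        · have h1 : t - b ≠ 0 := sub_ne_zero.2 htb
          have h2 : b - t ≠ 0 := sub_ne_zero.2 htb.symm
          field_simp
          ring
      have t2 : Filter.Tendsto (fun t => (1 / (t - a)) * Φ t)
          (nhdsWithin b (Set.Iio b)) (nhds ((1 / (b - a)) * Φ b)) := by
        have hc : ContinuousAt (fun t => (1 / (t - a)) * Φ t) b := by
          have hΦc' := hΦc.continuousAt (x := b)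
          fun_prop (disch := exact hba)
        exact hc.continuousWithinAt
      have := (t1.sub t2).congr' hev
      simpa only [hFb] using this
  have hFc : ContinuousOn F (Set.Icc a b) := by
    intro x hx
    rcases eq_or_lt_of_le hx.1 with heq | hax
    · rw [← heq]; exact hCa
    rcases eq_or_lt_of_le hx.2 with heq | hxb
    · rw [heq]; exact hCb
    have hbx : b - x ≠ 0 := sub_ne_zero.2 hxb.ne'
    have hxa : x - a ≠ 0 := sub_ne_zero.2 hax.ne'
    refine ((hGc x hbx hxa).congr ?_).continuousWithinAt
    filter_upwards [isOpen_Ioo.mem_nhds (Set.mem_Ioo.2 ⟨hax, hxb⟩)] with t ht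
    exact (hFG t ht).symm
  obtain ⟨x, hx, hEx⟩ := exists_hasDerivAt_eq_slope F E hab hFc hFd
  refine ⟨x, hx, ?_⟩
  have hsplit : (∫ s in x..b, f s) = Φ b - Φ x :=
    eq_sub_of_add_eq' (intervalIntegral.integral_add_adjacent_intervals
      (hf.intervalIntegrable a x) (hf.intervalIntegrable x b))
  rw [hsplit]
  have : E x = (F b - F a) / (b - a) := hEx
  rw [hEdef] at this
  simp only at this
  rw [this, hFa, hFb]
  have hΦb : Φ b = ∫ s in a..b, f s := rfl
  have hΦx : Φ x = ∫ s in a..x, f s := rfl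
  rw [hΦb]
  field_simp
  ring

theorem mvt_for_auxiliary_F (f : ℝ → ℝ) (a b : ℝ) (hab : a < b)
    (hf : ContinuousOn f (Set.Icc a b)) :
    ∃ x ∈ Set.Ioo a b,
      (1 / (b - x) ^ 2) * (∫ s in x..b, f s) +
          (1 / (x - a) ^ 2) * (∫ s in a..x, f s) -
          ((b - a) * f x) / ((x - a) * (b - x))
        = (2 / (b - a)) *
            ((f a + f b) / 2 - (1 / (b - a)) * ∫ s in a..b, f s) := by
  set g : ℝ → ℝ := fun t => f (min b (max a t)) with hgdef
  have hg : Continuous g := by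
    refine hf.comp_continuous (by fun_prop) fun t => ?_
    exact ⟨le_min hab.le (le_max_left a t), min_le_left b _⟩
  have heq : Set.EqOn g f (Set.Icc a b) := by
    intro t ht
    simp only [hgdef]
    rw [max_eq_right ht.1, min_eq_right ht.2]
  obtain ⟨x, hx, h⟩ := aux_mvt g a b hab hg
  refine ⟨x, hx, ?_⟩
  have hxm : x ∈ Set.Icc a b := Set.Ioo_subset_Icc_self hx
  have ham : a ∈ Set.Icc a b := Set.left_mem_Icc.2 hab.le
  have hbm : b ∈ Set.Icc a b := Set.right_mem_Icc.2 hab.le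
  have e1 : (∫ s in x..b, g s) = ∫ s in x..b, f s :=
    intervalIntegral.integral_congr (heq.mono (Set.uIcc_subset_Icc hxm hbm))
  have e2 : (∫ s in a..x, g s) = ∫ s in a..x, f s :=
    intervalIntegral.integral_congr (heq.mono (Set.uIcc_subset_Icc ham hxm))
  have e3 : (∫ s in a..b, g s) = ∫ s in a..b, f s :=
    intervalIntegral.integral_congr (heq.mono (Set.uIcc_subset_Icc ham hbm))
  rw [e1, e2, e3, heq hxm, heq ham, heq hbm] at h
  exact h
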